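/- Let n ≥ 0 and define Φ : ℝ^{n+1} × ℝ → ℝ^{n+1} × ℝ × ℝ by Φ(y, t) = ( e^t·y, cosh t − (e^t/2)·‖y‖², sinh t + (e^t/2)·‖y‖² ), where ‖·‖ and ⟨·,·⟩ denote the Euclidean norm and inner product on ℝ^{n+1}. Then Φ is differentiable, and if DΦ(y,t)(u, s) = (p, a, b) and DΦ(y,t)(v, r) = (q, a', b') denote the values of its differential at (y, t) on tangent vectors (u, s), (v, r) ∈ ℝ^{n+1} × ℝ, then ⟨p, q⟩ + a·a' − b·b' = e^{2t}·⟨u, v⟩ − s·r. -/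

import Mathlib

open scoped RealInnerProductSpace

/-- The map `Φ` of Section 3.5 is differentiable and is an isometry from the warped
product `ℝ^{n+1} ×_{e^t} ℝ` onto its image in the ambient space of the hyperboloid
model of de Sitter space. -/
theorem stmt15 (n : ℕ)
    (Φ : EuclideanSpace ℝ (Fin (n + 1)) × ℝ → EuclideanSpace ℝ (Fin (n + 1)) × ℝ × ℝ)
    (hΦ : ∀ (y : EuclideanSpace ℝ (Fin (n + 1))) (t : ℝ),
      Φ (y, t) = (Real.exp t • y,
        Real.cosh t - Real.exp t / 2 * ‖y‖ ^ 2,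
        Real.sinh t + Real.exp t / 2 * ‖y‖ ^ 2)) :
    Differentiable ℝ Φ ∧
      ∀ (y : EuclideanSpace ℝ (Fin (n + 1))) (t : ℝ)
        (u v : EuclideanSpace ℝ (Fin (n + 1))) (s r : ℝ),
        ⟪(fderiv ℝ Φ (y, t) (u, s)).1, (fderiv ℝ Φ (y, t) (v, r)).1⟫ +
            (fderiv ℝ Φ (y, t) (u, s)).2.1 * (fderiv ℝ Φ (y, t) (v, r)).2.1 -
            (fderiv ℝ Φ (y, t) (u, s)).2.2 * (fderiv ℝ Φ (y, t) (v, r)).2.2 =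
          Real.exp (2 * t) * ⟪u, v⟫ - s * r := by
  have hΦ' : Φ = fun p : EuclideanSpace ℝ (Fin (n + 1)) × ℝ =>
      (Real.exp p.2 • p.1,
       Real.cosh p.2 - Real.exp p.2 * 2⁻¹ * ‖p.1‖ ^ 2,
       Real.sinh p.2 + Real.exp p.2 * 2⁻¹ * ‖p.1‖ ^ 2) := by
    funext p
    obtain ⟨a, b⟩ := p
    rw [hΦ a b]
    simp [div_eq_mul_inv]
  subst hΦ'
  have key : ∀ (y : EuclideanSpace ℝ (Fin (n + 1))) (t : ℝ), ∃ D : EuclideanSpace ℝ (Fin (n + 1)) × ℝ →L[ℝ] EuclideanSpace ℝ (Fin (n + 1)) × ℝ × ℝ,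
      HasFDerivAt (fun p : EuclideanSpace ℝ (Fin (n + 1)) × ℝ =>
        (Real.exp p.2 • p.1,
         Real.cosh p.2 - Real.exp p.2 * 2⁻¹ * ‖p.1‖ ^ 2,
         Real.sinh p.2 + Real.exp p.2 * 2⁻¹ * ‖p.1‖ ^ 2)) D (y, t) ∧
      ∀ (u : EuclideanSpace ℝ (Fin (n + 1))) (s : ℝ), D (u, s) =
        (Real.exp t • u + (Real.exp t * s) • y,
         s * Real.sinh t - (Real.exp t * ⟪y, u⟫ + s * Real.exp t / 2 * ‖y‖ ^ 2),
         s * Real.cosh t + (Real.exp t * ⟪y, u⟫ + s * Real.exp t / 2 * ‖y‖ ^ 2)) := by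
    intro y t
    have hsnd : HasFDerivAt (fun p : EuclideanSpace ℝ (Fin (n + 1)) × ℝ => p.2)
        (ContinuousLinearMap.snd ℝ (EuclideanSpace ℝ (Fin (n + 1))) ℝ) (y, t) := hasFDerivAt_snd
    have hfst : HasFDerivAt (fun p : EuclideanSpace ℝ (Fin (n + 1)) × ℝ => p.1)
        (ContinuousLinearMap.fst ℝ (EuclideanSpace ℝ (Fin (n + 1))) ℝ) (y, t) := hasFDerivAt_fst
    have hexp := hsnd.exp
    have hns := hfst.norm_sq
    have h1 := hexp.smul hfst
    have h2 := (hsnd.cosh).sub ((hexp.mul_const (2:ℝ)⁻¹).mul hns)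
    have h3 := (hsnd.sinh).add ((hexp.mul_const (2:ℝ)⁻¹).mul hns)
    refine ⟨_, HasFDerivAt.prodMk h1 (HasFDerivAt.prodMk h2 h3), ?_⟩
    intro u s
    ext <;>
      simp [ContinuousLinearMap.smul_apply, ContinuousLinearMap.smulRight_apply,
        ContinuousLinearMap.prod_apply, smul_smul] <;>
      ring
  constructor
  · intro p
    obtain ⟨y, t⟩ := p
    obtain ⟨D, hD, -⟩ := key y t
    exact hD.differentiableAt
  · intro y t u v s r
    obtain ⟨D, hD, hval⟩ := key y t
    rw [hD.fderiv, hval, hval]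
    simp only [inner_add_left, inner_add_right, real_inner_smul_left,
      real_inner_smul_right, real_inner_self_eq_norm_sq]
    have hcs : Real.cosh t ^ 2 - Real.sinh t ^ 2 = 1 := Real.cosh_sq_sub_sinh_sq t
    have he2 : Real.exp (2 * t) = Real.exp t * Real.exp t := by
      rw [two_mul, Real.exp_add]
    have hce : Real.cosh t + Real.sinh t = Real.exp t := Real.cosh_add_sinh t
    have huy : ⟪u, y⟫ = ⟪y, u⟫ := real_inner_comm y u
    linear_combination (-(⟪u, v⟫ : ℝ)) * he2 - (s * r) * hcs -
      (s * (Real.exp t * ⟪y, v⟫) + s * r * (Real.exp t * ‖y‖ ^ 2) +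
        r * (Real.exp t * ⟪y, u⟫)) * hce + (r * Real.exp t ^ 2) * huy
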